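/- Let ψ₁, …, ψ_r be linearly independent vectors in ℝ^N. Then there exist pairwise distinct indices p₁, …, p_r in {1, …, N} such that for every l with 1 ≤ l ≤ r, the l×l matrix with entries ψ_j(p_i) for 1 ≤ i, j ≤ l is invertible. -/
import Mathlib

open Matrix


/-- Overall well-posedness of DEIM index selection: for linearly independent
vectors `ψ 0, …, ψ (r-1)` in `ℝ^N`, there exist pairwise distinct indices
`p 0, …, p (r-1)` such that for every `l` with `1 ≤ l ≤ r`, the leading
`l × l` interpolation matrix with entries `ψ j (p i)` (`i, j < l`) is
invertible. -/
theorem deim_indices_exist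
    (N r : ℕ)
    (ψ : Fin r → (Fin N → ℝ))
    (hψ : LinearIndependent ℝ ψ) :
    ∃ p : Fin r → Fin N, Function.Injective p ∧
      ∀ (l : ℕ) (hl1 : 1 ≤ l) (hl : l ≤ r),
        IsUnit (Matrix.of fun (i j : Fin l) =>
          ψ (Fin.castLE hl j) (p (Fin.castLE hl i))) := by
  induction r with
  | zero =>
      exact ⟨Fin.elim0, fun a => a.elim0, fun l hl1 hl => by omega⟩
  | succ r ih =>
      obtain ⟨p', hinj', hprop'⟩ :=
        ih (ψ ∘ Fin.castSucc) (hψ.comp _ (Fin.castSucc_injective r))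
      set A : Matrix (Fin r) (Fin r) ℝ :=
        Matrix.of (fun i j => ψ (Fin.castSucc j) (p' i)) with hA_def
      have hA : IsUnit A := by
        rcases Nat.eq_zero_or_pos r with h0 | hpos
        · subst h0; exact isUnit_of_subsingleton A
        · have h := hprop' r hpos le_rfl
          have : A = Matrix.of fun (i j : Fin r) =>
              (ψ ∘ Fin.castSucc) (Fin.castLE le_rfl j) (p' (Fin.castLE le_rfl i)) := by
            ext i j
            rfl
          rw [this]; exact h
      have hAdet : IsUnit A.det := (Matrix.isUnit_iff_isUnit_det A).mp hA
      set b : Fin r → ℝ := fun i => ψ (Fin.last r) (p' i) with hb_def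
      set c : Fin r → ℝ := A⁻¹ *ᵥ b with hc_def
      have hAc : A *ᵥ c = b := by
        rw [hc_def, Matrix.mulVec_mulVec, Matrix.mul_nonsing_inv A hAdet,
          Matrix.one_mulVec]
      set g : (Fin N → ℝ) :=
        fun x => ψ (Fin.last r) x - ∑ j, c j * ψ (Fin.castSucc j) x with hg_def
      have hgp' : ∀ i, g (p' i) = 0 := by
        intro i
        have : ∑ j, c j * ψ (Fin.castSucc j) (p' i) = (A *ᵥ c) i := by
          simp [Matrix.mulVec, dotProduct, hA_def, mul_comm]
        simp [hg_def, this, hAc, hb_def]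
      have hg_ne : ∃ x, g x ≠ 0 := by
        by_contra h
        push_neg at h
        have hsum : ∑ i, (Fin.snoc (fun j => -c j) (1:ℝ) : Fin (r+1) → ℝ) i • ψ i = 0 := by
          rw [Fin.sum_univ_castSucc]
          funext x
          have hgx := h x
          simp only [hg_def] at hgx
          simp only [Fin.snoc_castSucc, Fin.snoc_last, one_smul, Finset.sum_apply,
            Pi.add_apply, Pi.smul_apply, smul_eq_mul, Pi.zero_apply]
          have hneg : ∑ j, -c j * ψ (Fin.castSucc j) x
              = -∑ j, c j * ψ (Fin.castSucc j) x := by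
            simp [neg_mul]
          rw [hneg]
          linarith
        have := (Fintype.linearIndependent_iff.mp hψ) _ hsum (Fin.last r)
        simp at this
      obtain ⟨q, hq⟩ := hg_ne
      have hq_ne : ∀ i, q ≠ p' i := by
        intro i h
        exact hq (h ▸ hgp' i)
      have hinj : Function.Injective (Fin.snoc p' q : Fin (r+1) → Fin N) := by
        intro a b hab
        induction a using Fin.lastCases with
        | last =>
            induction b using Fin.lastCases with
            | last => rfl
            | cast i =>
                rw [Fin.snoc_last, Fin.snoc_castSucc] at hab
                exact absurd hab (hq_ne i)
        | cast i =>
            induction b using Fin.lastCases with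
            | last =>
                rw [Fin.snoc_last, Fin.snoc_castSucc] at hab
                exact absurd hab.symm (hq_ne i)
            | cast j =>
                rw [Fin.snoc_castSucc, Fin.snoc_castSucc] at hab
                exact congrArg Fin.castSucc (hinj' hab)
      refine ⟨Fin.snoc p' q, hinj, ?_⟩
      intro l hl1 hl
      rcases eq_or_lt_of_le hl with rfl | hlt
      · -- full matrix
        have hid : ∀ k : Fin (r+1), Fin.castLE hl k = k := fun k => Fin.ext rfl
        set M : Matrix (Fin (r+1)) (Fin (r+1)) ℝ :=
          Matrix.of (fun i j => ψ (Fin.castLE hl j)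
            ((Fin.snoc p' q : Fin (r+1) → Fin N) (Fin.castLE hl i))) with hM_def
        have hM_entry : ∀ i j, M i j = ψ j ((Fin.snoc p' q : Fin (r+1) → Fin N) i) := by
          intro i j; simp [hM_def, hid]
        have hker : ∀ x, M *ᵥ x = 0 → x = 0 := by
          intro x hx
          set x' : Fin r → ℝ := fun j => x (Fin.castSucc j) with hx'_def
          set t : ℝ := x (Fin.last r) with ht_def
          have hrow : ∀ i : Fin r, (A *ᵥ x') i + t * b i = 0 := by
            intro i
            have h0 := congrFun hx (Fin.castSucc i)
            simp only [Matrix.mulVec, dotProduct, Pi.zero_apply] at h0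
            rw [Fin.sum_univ_castSucc] at h0
            simp only [hM_entry, Fin.snoc_castSucc, Fin.snoc_last] at h0
            calc (A *ᵥ x') i + t * b i
                = ∑ j, ψ (Fin.castSucc j) (p' i) * x' j + ψ (Fin.last r) (p' i) * t := by
                  simp [Matrix.mulVec, dotProduct, hA_def, hb_def, mul_comm]
              _ = 0 := h0
          have hAx : A *ᵥ (x' + t • c) = 0 := by
            funext i
            rw [Matrix.mulVec_add, Matrix.mulVec_smul, hAc]
            have := hrow i
            simp only [Pi.add_apply, Pi.smul_apply, smul_eq_mul, Pi.zero_apply]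
            linarith
          have hx' : x' + t • c = 0 := by
            have hinv := Matrix.mulVec_injective_iff_isUnit.mpr hA
            have : A *ᵥ (x' + t • c) = A *ᵥ 0 := by rw [hAx, Matrix.mulVec_zero]
            exact hinv this
          have hx'eq : ∀ j, x' j = -(t * c j) := by
            intro j
            have := congrFun hx' j
            simp only [Pi.add_apply, Pi.smul_apply, smul_eq_mul, Pi.zero_apply] at this
            linarith
          have hlast : t * g q = 0 := by
            have h0 := congrFun hx (Fin.last r)
            simp only [Matrix.mulVec, dotProduct, Pi.zero_apply] at h0
            rw [Fin.sum_univ_castSucc] at h0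
            simp only [hM_entry, Fin.snoc_last] at h0
            have hs : ∑ j, ψ (Fin.castSucc j) q * x' j
                = -(t * ∑ j, c j * ψ (Fin.castSucc j) q) := by
              rw [Finset.mul_sum]
              rw [show -∑ j, t * (c j * ψ (Fin.castSucc j) q)
                  = ∑ j, -(t * (c j * ψ (Fin.castSucc j) q)) by simp]
              exact Finset.sum_congr rfl fun j _ => by rw [hx'eq j]; ring
            calc t * g q = ∑ j, ψ (Fin.castSucc j) q * x' j + ψ (Fin.last r) q * t := by
                  simp only [hg_def]
                  rw [hs]
                  ring
              _ = 0 := h0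
          have ht0 : t = 0 := by
            rcases mul_eq_zero.mp hlast with h | h
            · exact h
            · exact absurd h hq
          funext k
          induction k using Fin.lastCases with
          | last => exact ht0
          | cast j =>
              have := hx'eq j
              rw [ht0] at this
              simpa using this
        rw [← Matrix.mulVec_injective_iff_isUnit]
        intro x y hxy
        have : M *ᵥ (x - y) = 0 := by
          rw [Matrix.mulVec_sub, hxy, sub_self]
        have := hker _ this
        exact sub_eq_zero.mp this
      · -- l ≤ r case
        have hl' : l ≤ r := Nat.lt_succ_iff.mp hlt
        have h := hprop' l hl1 hl'
        have heq : (Matrix.of fun (i j : Fin l) =>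
            ψ (Fin.castLE hl j) ((Fin.snoc p' q : Fin (r+1) → Fin N) (Fin.castLE hl i)))
            = Matrix.of fun (i j : Fin l) =>
            (ψ ∘ Fin.castSucc) (Fin.castLE hl' j) (p' (Fin.castLE hl' i)) := by
          ext i j
          have e1 : Fin.castLE hl i = Fin.castSucc (Fin.castLE hl' i) := Fin.ext rfl
          have e2 : Fin.castLE hl j = Fin.castSucc (Fin.castLE hl' j) := Fin.ext rfl
          rw [Matrix.of_apply, Matrix.of_apply, e1, e2, Fin.snoc_castSucc]
          rfl
        rw [heq]
        exact h
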